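/- In a paraclique graph X, a path is a geodesic if and only if it crosses each hyperplane at most once; consequently if p = [o,x] and q = [o,y] are geodesic paths such that every hyperplane crossed by p is crossed by q through the same ordered pair of sectors, then for any geodesic [x,y] the concatenation p·[x,y] is again a geodesic. -/

import Mathlib

attribute [local instance] Classical.propDecidable

variable {V : Type*}

/-- A maximal clique of a simple graph. -/
def IsMaxClique (G : SimpleGraph V) (s : Set V) : Prop :=
  G.IsClique s ∧ ∀ t : Set V, G.IsClique t → s ⊆ t → s = t

/-- A set of vertices is gated: every vertex has a gate in it. -/
def IsGated (G : SimpleGraph V) (s : Set V) : Prop :=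
  ∀ x : V, ∃ g ∈ s, ∀ y ∈ s, G.dist x y = G.dist x g + G.dist g y

/-- Combinatorial distance between two sets of vertices. -/
noncomputable def setDist (G : SimpleGraph V) (s t : Set V) : ℕ :=
  sInf {n | ∃ x ∈ s, ∃ y ∈ t, G.dist x y = n}

/-- Two cliques are parallel: there is a bijection moving every vertex by the set
distance `D`, all other cross-distances being `D + 1`. -/
def Parallel (G : SimpleGraph V) (s t : Set V) : Prop :=
  ∃ f : V → V, Set.BijOn f s t ∧ ∀ x ∈ s, G.dist x (f x) = setDist G s t ∧
    ∀ y ∈ t, y ≠ f x → G.dist x y = setDist G s t + 1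

/-- A paraclique graph: every maximal clique is gated and parallelism of maximal
cliques is transitive. -/
def IsParaclique (G : SimpleGraph V) : Prop :=
  (∀ s : Set V, IsMaxClique G s → IsGated G s) ∧
  (∀ s t u : Set V, IsMaxClique G s → IsMaxClique G t → IsMaxClique G u →
    Parallel G s t → Parallel G t u → Parallel G s u)

/-- The edges of a clique. -/
def cliqueEdges (Δ : Set V) : Set (Sym2 V) :=
  {e | ∃ u ∈ Δ, ∃ v ∈ Δ, u ≠ v ∧ e = s(u, v)}

/-- A hyperplane: the union of the edge sets of the maximal cliques in one
parallelism class. -/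
def IsHyperplane (G : SimpleGraph V) (H : Set (Sym2 V)) : Prop :=
  ∃ Δ : Set V, IsMaxClique G Δ ∧
    H = ⋃ Δ' ∈ {Δ' : Set V | IsMaxClique G Δ' ∧ Parallel G Δ Δ'}, cliqueEdges Δ'

/-- Two vertices lie in the same sector delimited by the hyperplane `H` if they are
connected in the graph with the edges of `H` removed. -/
def SameSector (G : SimpleGraph V) (H : Set (Sym2 V)) (u v : V) : Prop :=
  (G.deleteEdges H).Reachable u v

/-- The sector (delimited by `H`) containing the vertex `v`. -/
def sectorOf (G : SimpleGraph V) (H : Set (Sym2 V)) (v : V) : Set V :=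
  {u | SameSector G H u v}

/-- The set of sectors delimited by the hyperplane `H`. -/
def Sectors (G : SimpleGraph V) (H : Set (Sym2 V)) : Set (Set V) :=
  Set.range (sectorOf G H)

/-- A walk is geodesic if its length realizes the graph distance. -/
def IsGeodesicWalk (G : SimpleGraph V) {u v : V} (w : G.Walk u v) : Prop :=
  w.length = G.dist u v

/-- The number of times a walk crosses the hyperplane `H`. -/
noncomputable def crossings (G : SimpleGraph V) (H : Set (Sym2 V)) {u v : V}
    (w : G.Walk u v) : ℕ :=
  (w.edges.filter fun e => decide (e ∈ H)).length


open SimpleGraph Set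

section helpers
variable {G : SimpleGraph V} {s t : Set V}

lemma clique_dist_eq_one (hc : G.IsClique s) {a b : V} (ha : a ∈ s) (hb : b ∈ s)
    (hab : a ≠ b) : G.dist a b = 1 :=
  dist_eq_one_iff_adj.2 (hc ha hb hab)

lemma clique_dist_le_one (hc : G.IsClique s) {a b : V} (ha : a ∈ s) (hb : b ∈ s) :
    G.dist a b ≤ 1 := by
  rcases eq_or_ne a b with rfl | h
  · rw [SimpleGraph.dist_self]; omega
  · exact (clique_dist_eq_one hc ha hb h).le

lemma exists_maxClique {a b : V} (hab : G.Adj a b) :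
    ∃ Δ : Set V, IsMaxClique G Δ ∧ a ∈ Δ ∧ b ∈ Δ := by
  have hch : ∀ c ⊆ {s : Set V | G.IsClique s}, IsChain (· ⊆ ·) c → c.Nonempty →
      ∃ ub ∈ {s : Set V | G.IsClique s}, ∀ s ∈ c, s ⊆ ub := by
    intro c hc hchain _
    refine ⟨⋃₀ c, ?_, fun s hs => subset_sUnion_of_mem hs⟩
    rintro x ⟨s₁, hs₁, hxs₁⟩ y ⟨s₂, hs₂, hys₂⟩ hxy
    rcases hchain.total hs₁ hs₂ with h | h
    · exact hc hs₂ (h hxs₁) hys₂ hxy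
    · exact hc hs₁ hxs₁ (h hys₂) hxy
  obtain ⟨m, hsub, hm⟩ := zorn_subset_nonempty {s : Set V | G.IsClique s} hch
    {a, b} (by simp [SimpleGraph.isClique_pair, hab])
  exact ⟨m, ⟨hm.1, fun t ht hmt => hmt.antisymm (hm.2 ht hmt)⟩,
    hsub (by simp), hsub (by simp)⟩

lemma maxClique_unique (hconn : G.Connected) (hg : ∀ s : Set V, IsMaxClique G s → IsGated G s)
    {Δ Δ' : Set V} (hΔ : IsMaxClique G Δ) (hΔ' : IsMaxClique G Δ') {a b : V}
    (hab : a ≠ b) (haΔ : a ∈ Δ) (hbΔ : b ∈ Δ) (haΔ' : a ∈ Δ') (hbΔ' : b ∈ Δ') : Δ = Δ' := by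
  by_contra hne
  have hsub : ¬ Δ' ⊆ Δ := fun h => hne (hΔ'.2 Δ hΔ.1 h).symm
  obtain ⟨w, hwΔ', hwΔ⟩ := not_subset.1 hsub
  obtain ⟨g, hgΔ, hgate⟩ := hg Δ hΔ w
  have hwa : G.dist w a = 1 := clique_dist_eq_one hΔ'.1 hwΔ' haΔ' (fun h => hwΔ (h ▸ haΔ))
  have hwb : G.dist w b = 1 := clique_dist_eq_one hΔ'.1 hwΔ' hbΔ' (fun h => hwΔ (h ▸ hbΔ))
  have h1 := hgate a haΔ
  have h2 := hgate b hbΔ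
  have hwg : G.dist w g ≠ 0 := fun h => hwΔ ((hconn.dist_eq_zero_iff.1 h) ▸ hgΔ)
  rw [hwa] at h1; rw [hwb] at h2
  have hga : G.dist g a = 0 := by omega
  have hgb : G.dist g b = 0 := by omega
  exact hab ((hconn.dist_eq_zero_iff.1 hga).symm.trans (hconn.dist_eq_zero_iff.1 hgb))

lemma setDist_comm : setDist G s t = setDist G t s := by
  unfold setDist
  congr 1
  ext n
  constructor
  · rintro ⟨x, hx, y, hy, rfl⟩; exact ⟨y, hy, x, hx, SimpleGraph.dist_comm⟩
  · rintro ⟨x, hx, y, hy, rfl⟩; exact ⟨y, hy, x, hx, SimpleGraph.dist_comm⟩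

lemma parallel_self (hc : G.IsClique s) : Parallel G s s := by
  refine ⟨id, Set.bijOn_id s, fun x hx => ?_⟩
  have h0 : setDist G s s = 0 :=
    Nat.eq_zero_of_le_zero (Nat.sInf_le ⟨x, hx, x, hx, SimpleGraph.dist_self⟩)
  rw [h0]
  exact ⟨SimpleGraph.dist_self, fun y hy hyx => clique_dist_eq_one hc hx hy (Ne.symm hyx)⟩

lemma Parallel.symm' [Nonempty V] (h : Parallel G s t) : Parallel G t s := by
  obtain ⟨f, hbij, hf⟩ := h
  have hinv := hbij.invOn_invFunOn
  refine ⟨Function.invFunOn f s, hinv.symm.bijOn hbij.surjOn.mapsTo_invFunOn hbij.mapsTo,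
    fun y hy => ?_⟩
  have hmem : Function.invFunOn f s y ∈ s := hbij.surjOn.mapsTo_invFunOn hy
  have hfy : f (Function.invFunOn f s y) = y := hinv.2 hy
  rw [setDist_comm (s := t) (t := s)]
  constructor
  · rw [SimpleGraph.dist_comm]
    have := (hf _ hmem).1
    rwa [hfy] at this
  · intro x hx hxne
    rw [SimpleGraph.dist_comm]
    refine (hf x hx).2 y hy fun hyfx => hxne ?_
    rw [hyfx, hinv.1 hx]

lemma mem_of_cliqueEdges {Δ : Set V} {a b : V} (h : s(a,b) ∈ cliqueEdges Δ) :
    a ∈ Δ ∧ b ∈ Δ ∧ a ≠ b := by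
  obtain ⟨x, hx, y, hy, hxy, he⟩ := h
  rw [Sym2.eq_iff] at he
  rcases he with ⟨rfl, rfl⟩ | ⟨rfl, rfl⟩
  · exact ⟨hx, hy, hxy⟩
  · exact ⟨hy, hx, hxy.symm⟩

lemma parallel_of_gate_ne (hconn : G.Connected) (hpc : IsParaclique G)
    {Δ Δ₂ : Set V} (hΔ : IsMaxClique G Δ) (hΔ₂ : IsMaxClique G Δ₂)
    (p : V → V) (hp1 : ∀ x, p x ∈ Δ)
    (hp2 : ∀ x, ∀ y ∈ Δ, G.dist x y = G.dist x (p x) + G.dist (p x) y)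
    {u v : V} (hu : u ∈ Δ₂) (hv : v ∈ Δ₂) (huv : u ≠ v) (hpne : p u ≠ p v) :
    Parallel G Δ Δ₂ := by
  -- the dichotomy for adjacent vertices with distinct gates
  have hdich : ∀ x y : V, G.Adj x y → p x ≠ p y → G.dist x (p x) = G.dist y (p y) := by
    intro x y hxy hne
    have hpp : G.dist (p x) (p y) = 1 := clique_dist_eq_one hΔ.1 (hp1 x) (hp1 y) hne
    have hpp' : G.dist (p y) (p x) = 1 := by rwa [SimpleGraph.dist_comm] at hpp
    have h1 : G.dist x (p y) = G.dist x (p x) + 1 := by rw [hp2 x (p y) (hp1 y), hpp]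
    have h2 : G.dist y (p x) = G.dist y (p y) + 1 := by rw [hp2 y (p x) (hp1 x), hpp']
    have hd1 : G.dist x y = 1 := dist_eq_one_iff_adj.2 hxy
    have hd2 : G.dist y x = 1 := dist_eq_one_iff_adj.2 hxy.symm
    have t1 : G.dist x (p y) ≤ G.dist x y + G.dist y (p y) := hconn.dist_triangle
    have t2 : G.dist y (p x) ≤ G.dist y x + G.dist x (p x) := hconn.dist_triangle
    omega
  set m := G.dist u (p u) with hm
  have hadjΔ₂ : ∀ x y : V, x ∈ Δ₂ → y ∈ Δ₂ → x ≠ y → G.Adj x y := fun x y hx hy h => hΔ₂.1 hx hy h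
  have hvm : G.dist v (p v) = m := (hdich u v (hadjΔ₂ u v hu hv huv) hpne).symm
  have step1 : ∀ x ∈ Δ₂, G.dist x (p x) = m := by
    intro x hx
    rcases eq_or_ne x u with rfl | hxu
    · rfl
    rcases eq_or_ne x v with rfl | hxv
    · exact hvm
    rcases eq_or_ne (p x) (p u) with hpu | hpu
    · have : p x ≠ p v := by rw [hpu]; exact hpne
      rw [hdich x v (hadjΔ₂ x v hx hv hxv) this, hvm]
    · exact hdich x u (hadjΔ₂ x u hx hu hxu) hpu
  have step2 : ∀ x ∈ Δ₂, ∀ y ∈ Δ, G.dist x y = m + G.dist (p x) y := by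
    intro x hx y hy
    rw [hp2 x y hy, step1 x hx]
  have step2le : ∀ x ∈ Δ₂, ∀ y ∈ Δ, G.dist x y ≤ m + 1 := by
    intro x hx y hy
    rw [step2 x hx y hy]
    have := clique_dist_le_one hΔ.1 (hp1 x) hy
    omega
  have step2c : ∀ x ∈ Δ₂, ∀ y ∈ Δ, G.dist x y = m → y = p x := by
    intro x hx y hy hd
    rw [step2 x hx y hy] at hd
    have h0 : G.dist (p x) y = 0 := by omega
    exact (hconn.dist_eq_zero_iff.1 h0).symm
  -- gates in Δ₂
  obtain ⟨hgated, _⟩ := hpc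
  have hg2 := hgated Δ₂ hΔ₂
  choose q hq1 hq2 using hg2
  have step3a : ∀ y ∈ Δ, G.dist y (q y) = m := by
    intro y hy
    have hge : m ≤ G.dist y (q y) := by
      have := step2 (q y) (hq1 y) y hy
      rw [SimpleGraph.dist_comm (u := y)]
      omega
    have hle : G.dist y (q y) ≤ m := by
      have hu' := hq2 y u hu
      have hv' := hq2 y v hv
      have hyu : G.dist y u ≤ m + 1 := by
        rw [SimpleGraph.dist_comm]; exact step2le u hu y hy
      have hyv : G.dist y v ≤ m + 1 := by
        rw [SimpleGraph.dist_comm]; exact step2le v hv y hy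
      rcases eq_or_ne (q y) u with hqu | hqu
      · have : q y ≠ v := by rw [hqu]; exact huv
        have hpos : 0 < G.dist (q y) v := hconn.pos_dist_of_ne this
        omega
      · have hpos : 0 < G.dist (q y) u := hconn.pos_dist_of_ne hqu
        omega
    omega
  have step3b : ∀ y ∈ Δ, ∀ x ∈ Δ₂, G.dist y x = m + G.dist (q y) x := by
    intro y hy x hx
    rw [hq2 y x hx, step3a y hy]
  have step3c : ∀ y ∈ Δ, ∀ x ∈ Δ₂, G.dist y x = m → x = q y := by
    intro y hy x hx hd
    rw [step3b y hy x hx] at hd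
    have h0 : G.dist (q y) x = 0 := by omega
    exact (hconn.dist_eq_zero_iff.1 h0).symm
  -- the set distance is m
  have hmem : m ∈ {n | ∃ x ∈ Δ, ∃ y ∈ Δ₂, G.dist x y = n} :=
    ⟨p u, hp1 u, u, hu, by rw [SimpleGraph.dist_comm]⟩
  have hsd : setDist G Δ Δ₂ = m := by
    unfold setDist
    refine le_antisymm (Nat.sInf_le hmem) ?_
    obtain ⟨x, hx, y, hy, hd⟩ := Nat.sInf_mem ⟨m, hmem⟩
    rw [← hd, step3b x hx y hy]
    omega
  -- q is the parallelism bijection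
  refine ⟨q, ⟨fun y _ => hq1 y, ?_, ?_⟩, ?_⟩
  · intro y hy y' hy' hqq
    have h1 : y = p (q y) := by
      refine step2c (q y) (hq1 y) y hy ?_
      rw [SimpleGraph.dist_comm]; exact step3a y hy
    have h2 : y' = p (q y') := by
      refine step2c (q y') (hq1 y') y' hy' ?_
      rw [SimpleGraph.dist_comm]; exact step3a y' hy'
    rw [h1, h2, hqq]
  · intro x hx
    refine ⟨p x, hp1 x, ?_⟩
    refine (step3c (p x) (hp1 x) x hx ?_).symm
    rw [SimpleGraph.dist_comm]; exact step1 x hx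
  · intro y hy
    rw [hsd]
    refine ⟨step3a y hy, fun x hx hxq => ?_⟩
    rw [step3b y hy x hx, clique_dist_eq_one hΔ₂.1 (hq1 y) hx (Ne.symm hxq)]

lemma edge_mem_hyperplane {Δ Δ' : Set V} (hΔ' : IsMaxClique G Δ') (hpar : Parallel G Δ Δ')
    {a b : V} (ha : a ∈ Δ') (hb : b ∈ Δ') (hab : a ≠ b) :
    s(a,b) ∈ ⋃ Δ'' ∈ {Δ'' : Set V | IsMaxClique G Δ'' ∧ Parallel G Δ Δ''}, cliqueEdges Δ'' := by
  refine Set.mem_biUnion ⟨hΔ', hpar⟩ ⟨a, ha, b, hb, hab, rfl⟩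

lemma hyperplane_separates (hconn : G.Connected) (hpc : IsParaclique G)
    {H : Set (Sym2 V)} (hH : IsHyperplane G H) {a b : V}
    (hmem : s(a,b) ∈ H) (hab : a ≠ b) : ¬ SameSector G H a b := by
  obtain ⟨Δ, hΔ, rfl⟩ := hH
  choose p hp1 hp2 using hpc.1 Δ hΔ
  -- the gate in Δ is invariant along edges not in the hyperplane
  have hinv : ∀ x y : V, G.Adj x y →
      s(x,y) ∉ ⋃ Δ'' ∈ {Δ'' : Set V | IsMaxClique G Δ'' ∧ Parallel G Δ Δ''}, cliqueEdges Δ'' →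
      p x = p y := by
    intro x y hxy hnot
    by_contra hne
    obtain ⟨Δ₂, hΔ₂, hx2, hy2⟩ := exists_maxClique hxy
    exact hnot (edge_mem_hyperplane hΔ₂
      (parallel_of_gate_ne hconn hpc hΔ hΔ₂ p hp1 hp2 hx2 hy2 hxy.ne hne) hx2 hy2 hxy.ne)
  -- hence the gate is invariant on sectors
  have hreach : ∀ x y : V, SameSector G
      (⋃ Δ'' ∈ {Δ'' : Set V | IsMaxClique G Δ'' ∧ Parallel G Δ Δ''}, cliqueEdges Δ'') x y →
      p x = p y := by
    intro x y hr
    obtain ⟨w⟩ := hr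
    induction w with
    | nil => rfl
    | cons h q ih =>
      rw [SimpleGraph.deleteEdges_adj] at h
      exact (hinv _ _ h.1 h.2).trans ih
  -- but the two ends of an edge of the hyperplane have distinct gates
  intro hss
  have hpab : p a = p b := hreach a b hss
  simp only [Set.mem_iUnion, Set.mem_setOf_eq] at hmem
  obtain ⟨Δ', ⟨hΔ', hpar⟩, hab'⟩ := hmem
  obtain ⟨haΔ', hbΔ', -⟩ := mem_of_cliqueEdges hab'
  obtain ⟨f, hbij, hf⟩ := hpar
  have key : ∀ c : V, c ∈ Δ' → f (p c) = c := by
    intro c hc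
    obtain ⟨xc, hxc, hfxc⟩ := hbij.surjOn hc
    have hdc : G.dist c xc = setDist G Δ Δ' := by
      rw [SimpleGraph.dist_comm, ← hfxc]
      exact (hf xc hxc).1
    have hgle : G.dist c (p c) ≤ setDist G Δ Δ' := by
      have := hp2 c xc hxc
      omega
    by_contra hne
    have := (hf (p c) (hp1 c)).2 c hc (fun h => hne h.symm)
    rw [SimpleGraph.dist_comm (u := p c)] at this
    omega
  exact hab (by rw [← key a haΔ', ← key b hbΔ', hpab])

lemma crossings_nil {u : V} (H : Set (Sym2 V)) : crossings G H (SimpleGraph.Walk.nil' u) = 0 := by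
  simp [crossings]

lemma crossings_cons {u u' v : V} (h : G.Adj u u') (w : G.Walk u' v) (H : Set (Sym2 V)) :
    crossings G H (SimpleGraph.Walk.cons h w) =
      (if s(u,u') ∈ H then 1 else 0) + crossings G H w := by
  by_cases hmem : s(u,u') ∈ H <;>
    simp [crossings, List.filter_cons, hmem, Nat.add_comm]

lemma crossings_append {u v x : V} (p : G.Walk u v) (r : G.Walk v x) (H : Set (Sym2 V)) :
    crossings G H (p.append r) = crossings G H p + crossings G H r := by
  simp [crossings, SimpleGraph.Walk.edges_append, List.filter_append]

lemma crossings_pos_iff {u v : V} (w : G.Walk u v) (H : Set (Sym2 V)) :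
    1 ≤ crossings G H w ↔ ∃ e ∈ w.edges, e ∈ H := by
  unfold crossings
  rw [Nat.one_le_iff_ne_zero, Ne, List.length_eq_zero_iff, List.filter_eq_nil_iff]
  push_neg
  simp

lemma sameSector_refl {H : Set (Sym2 V)} (u : V) : SameSector G H u u := Reachable.refl u

lemma sameSector_symm {H : Set (Sym2 V)} {u v : V} (h : SameSector G H u v) :
    SameSector G H v u := Reachable.symm h

lemma sameSector_trans {H : Set (Sym2 V)} {u v w : V} (h : SameSector G H u v)
    (h' : SameSector G H v w) : SameSector G H u w := Reachable.trans h h'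

lemma sameSector_of_adj {H : Set (Sym2 V)} {u v : V} (h : G.Adj u v)
    (hn : s(u,v) ∉ H) : SameSector G H u v :=
  SimpleGraph.Adj.reachable (by rw [SimpleGraph.deleteEdges_adj]; exact ⟨h, hn⟩)

lemma sameSector_of_no_crossings {H : Set (Sym2 V)} {u v : V} {w : G.Walk u v}
    (h : crossings G H w = 0) : SameSector G H u v := by
  induction w with
  | nil => exact sameSector_refl _
  | @cons a b c hadj q ih =>
    rw [crossings_cons] at h
    by_cases hmem : s(a,b) ∈ H
    · simp [hmem] at h
    · rw [if_neg hmem] at h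
      exact sameSector_trans (sameSector_of_adj hadj hmem) (ih (by omega))

lemma geodesic_append_parts (hconn : G.Connected) {u v x : V} (p : G.Walk u v) (r : G.Walk v x)
    (h : IsGeodesicWalk G (p.append r)) :
    IsGeodesicWalk G p ∧ IsGeodesicWalk G r ∧ G.dist u x = p.length + r.length := by
  have h1 : G.dist u v ≤ p.length := SimpleGraph.dist_le p
  have h2 : G.dist v x ≤ r.length := SimpleGraph.dist_le r
  have h3 : G.dist u x ≤ G.dist u v + G.dist v x := hconn.dist_triangle
  have h4 : (p.append r).length = p.length + r.length := SimpleGraph.Walk.length_append p r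
  unfold IsGeodesicWalk at h ⊢
  omega

lemma exists_crossing_split {H : Set (Sym2 V)} {u v : V} (w : G.Walk u v)
    (h : 1 ≤ crossings G H w) :
    ∃ (c d : V) (w₁ : G.Walk u c) (hcd : G.Adj c d) (w₂ : G.Walk d v),
      w = w₁.append (SimpleGraph.Walk.cons hcd w₂) ∧ s(c,d) ∈ H ∧ crossings G H w₁ = 0 := by
  induction w with
  | nil => rw [crossings_nil] at h; omega
  | @cons a b c hadj q ih =>
    by_cases hmem : s(a,b) ∈ H
    · exact ⟨a, b, SimpleGraph.Walk.nil, hadj, q, by simp, hmem, crossings_nil H⟩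
    · rw [crossings_cons, if_neg hmem] at h
      obtain ⟨c', d', w₁, hcd, w₂, heq, hm, h0⟩ := ih (by omega)
      refine ⟨c', d', SimpleGraph.Walk.cons hadj w₁, hcd, w₂, ?_, hm, ?_⟩
      · rw [SimpleGraph.Walk.cons_append, heq]
      · rw [crossings_cons, if_neg hmem, h0]

lemma geodesic_crossings_le_one (hconn : G.Connected) (hpc : IsParaclique G)
    {u v : V} (w : G.Walk u v) (hw : IsGeodesicWalk G w) {H : Set (Sym2 V)}
    (hH : IsHyperplane G H) : crossings G H w ≤ 1 := by
  have : Nonempty V := ⟨u⟩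
  by_contra hcon
  push_neg at hcon
  obtain ⟨a, b, w₁, hab, t, heq, hmab, h0⟩ := exists_crossing_split (H := H) w (by omega)
  have hcw : crossings G H w = 1 + crossings G H t := by
    rw [heq, crossings_append, crossings_cons, h0, if_pos hmab]
    omega
  have hct : 1 ≤ crossings G H t := by omega
  obtain ⟨c, d, w₃, hcd, w₄, heq₂, hmcd, -⟩ := exists_crossing_split t hct
  -- distance computation along the geodesic
  have hw' : IsGeodesicWalk G (SimpleGraph.Walk.cons hab t) := by
    rw [heq] at hw
    exact (geodesic_append_parts hconn _ _ hw).2.1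
  have hmid : SimpleGraph.Walk.cons hab t =
      (SimpleGraph.Walk.cons hab (w₃.append (SimpleGraph.Walk.cons hcd
        (SimpleGraph.Walk.nil' d)))).append w₄ := by
    rw [heq₂]
    simp only [SimpleGraph.Walk.cons_append]
    rw [← SimpleGraph.Walk.append_assoc]
    simp only [SimpleGraph.Walk.cons_append, SimpleGraph.Walk.nil_append]
  rw [hmid] at hw'
  have hdad : G.dist a d = w₃.length + 2 := by
    have := (geodesic_append_parts hconn _ _ hw').1
    unfold IsGeodesicWalk at this
    simp [SimpleGraph.Walk.length_append] at this
    omega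
  -- the two crossed cliques are parallel
  obtain ⟨Δ, hΔ, rfl⟩ := hH
  simp only [Set.mem_iUnion, Set.mem_setOf_eq] at hmab hmcd
  obtain ⟨Δ₁, ⟨hΔ₁, hpar₁⟩, hab'⟩ := hmab
  obtain ⟨Δ₂, ⟨hΔ₂, hpar₂⟩, hcd'⟩ := hmcd
  obtain ⟨haΔ₁, hbΔ₁, -⟩ := mem_of_cliqueEdges hab'
  obtain ⟨hcΔ₂, hdΔ₂, -⟩ := mem_of_cliqueEdges hcd'
  have hpar : Parallel G Δ₁ Δ₂ := hpc.2 Δ₁ Δ Δ₂ hΔ₁ hΔ hΔ₂ hpar₁.symm' hpar₂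
  obtain ⟨f, hbij, hf⟩ := hpar
  have hD1 : setDist G Δ₁ Δ₂ ≤ G.dist b c := Nat.sInf_le ⟨b, hbΔ₁, c, hcΔ₂, rfl⟩
  have hD2 : G.dist b c ≤ w₃.length := SimpleGraph.dist_le w₃
  have hD3 : G.dist a d ≤ setDist G Δ₁ Δ₂ + 1 := by
    rcases eq_or_ne d (f a) with hfa | hfa
    · rw [hfa, (hf a haΔ₁).1]; omega
    · rw [(hf a haΔ₁).2 d hdΔ₂ hfa]
  omega

lemma dart_edge_eq {d : G.Dart} : d.edge = s(d.fst, d.snd) := rfl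

lemma cross_once_dart {H : Set (Sym2 V)} {u v : V} {w : G.Walk u v}
    (h1 : crossings G H w = 1) {d : G.Dart} (hd : d ∈ w.darts) (hdH : d.edge ∈ H) :
    SameSector G H u d.fst ∧ SameSector G H d.snd v := by
  induction w with
  | nil => simp [SimpleGraph.Walk.darts_nil] at hd
  | @cons a b c hadj q ih =>
    rw [SimpleGraph.Walk.darts_cons] at hd
    rw [crossings_cons] at h1
    rcases List.mem_cons.1 hd with rfl | hd'
    · have hmem : s(a,b) ∈ H := hdH
      rw [if_pos hmem] at h1
      exact ⟨sameSector_refl _, sameSector_of_no_crossings (w := q) (by omega)⟩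
    · have hq : 1 ≤ crossings G H q :=
        (crossings_pos_iff q H).2 ⟨d.edge, List.mem_map_of_mem (f := SimpleGraph.Dart.edge) hd', hdH⟩
      have hmem : s(a,b) ∉ H := by
        intro hm; rw [if_pos hm] at h1; omega
      rw [if_neg hmem] at h1
      obtain ⟨hs1, hs2⟩ := ih (by omega) hd'
      exact ⟨sameSector_trans (sameSector_of_adj hadj hmem) hs1, hs2⟩

lemma cross_once_not_sameSector (hconn : G.Connected) (hpc : IsParaclique G)
    {H : Set (Sym2 V)} (hH : IsHyperplane G H) {u v : V} {w : G.Walk u v}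
    (h1 : crossings G H w = 1) : ¬ SameSector G H u v := by
  obtain ⟨e, he, heH⟩ := (crossings_pos_iff w H).1 (by omega)
  obtain ⟨d, hd, rfl⟩ := List.mem_map.1 he
  obtain ⟨hs1, hs2⟩ := cross_once_dart h1 hd heH
  intro hss
  refine hyperplane_separates hconn hpc hH (dart_edge_eq ▸ heH) d.adj.ne ?_
  exact sameSector_trans (sameSector_symm hs1) (sameSector_trans hss (sameSector_symm hs2))

lemma hyperplane_unique (hconn : G.Connected) (hpc : IsParaclique G) [Nonempty V]
    {H H' : Set (Sym2 V)} (hH : IsHyperplane G H) (hH' : IsHyperplane G H')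
    {e : Sym2 V} (he : e ∈ H) (he' : e ∈ H') : H = H' := by
  obtain ⟨Δ, hΔ, rfl⟩ := hH
  obtain ⟨Δ', hΔ', rfl⟩ := hH'
  simp only [Set.mem_iUnion, Set.mem_setOf_eq] at he he'
  obtain ⟨Δ₁, ⟨hΔ₁, hpar₁⟩, hce₁⟩ := he
  obtain ⟨Δ₂, ⟨hΔ₂, hpar₂⟩, hce₂⟩ := he'
  obtain ⟨a, ha₁, b, hb₁, hab, rfl⟩ := hce₁
  obtain ⟨ha₂, hb₂, -⟩ := mem_of_cliqueEdges hce₂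
  have h12 : Δ₁ = Δ₂ := maxClique_unique hconn hpc.1 hΔ₁ hΔ₂ hab ha₁ hb₁ ha₂ hb₂
  subst h12
  have hΔΔ' : Parallel G Δ Δ' :=
    hpc.2 Δ Δ₁ Δ' hΔ hΔ₁ hΔ' hpar₁ hpar₂.symm'
  have hiff : ∀ Δ₃ : Set V, IsMaxClique G Δ₃ → (Parallel G Δ Δ₃ ↔ Parallel G Δ' Δ₃) := by
    intro Δ₃ hΔ₃
    exact ⟨fun h => hpc.2 Δ' Δ Δ₃ hΔ' hΔ hΔ₃ hΔΔ'.symm' h,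
      fun h => hpc.2 Δ Δ' Δ₃ hΔ hΔ' hΔ₃ hΔΔ' h⟩
  ext g
  simp only [Set.mem_iUnion, Set.mem_setOf_eq]
  constructor
  · rintro ⟨Δ₃, ⟨h₃, hp₃⟩, hg⟩; exact ⟨Δ₃, ⟨h₃, (hiff Δ₃ h₃).1 hp₃⟩, hg⟩
  · rintro ⟨Δ₃, ⟨h₃, hp₃⟩, hg⟩; exact ⟨Δ₃, ⟨h₃, (hiff Δ₃ h₃).2 hp₃⟩, hg⟩

lemma exists_hyperplane_of_edge {e : Sym2 V} (he : e ∈ G.edgeSet) :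
    ∃ H : Set (Sym2 V), IsHyperplane G H ∧ e ∈ H := by
  induction e with
  | h a b =>
    rw [SimpleGraph.mem_edgeSet] at he
    obtain ⟨Δ₁, hΔ₁, ha, hb⟩ := exists_maxClique he
    exact ⟨_, ⟨Δ₁, hΔ₁, rfl⟩,
      edge_mem_hyperplane hΔ₁ (parallel_self hΔ₁.1) ha hb he.ne⟩

lemma nodup_map_hyp {l : List (Sym2 V)} (hyp : Sym2 V → Set (Sym2 V))
    (hself : ∀ e ∈ l, e ∈ hyp e)
    (hcount : ∀ e ∈ l, (l.filter fun e' => decide (e' ∈ hyp e)).length ≤ 1) :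
    (l.map hyp).Nodup := by
  induction l with
  | nil => simp
  | cons e l' ih =>
    rw [List.map_cons, List.nodup_cons]
    have hmono : ∀ X : Set (Sym2 V),
        (l'.filter fun e' => decide (e' ∈ X)).length ≤
          ((e :: l').filter fun e' => decide (e' ∈ X)).length := by
      intro X
      rw [List.filter_cons]
      split <;> simp
    constructor
    · intro hmem
      obtain ⟨e', he', heq⟩ := List.mem_map.1 hmem
      have h := hcount e (List.mem_cons_self)
      rw [List.filter_cons, if_pos (by simpa using hself e (List.mem_cons_self))] at h
      have he'f : e' ∈ l'.filter fun x => decide (x ∈ hyp e) := by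
        rw [List.mem_filter]
        exact ⟨he', by simpa [heq] using hself e' (List.mem_cons_of_mem e he')⟩
      have hpos : 0 < (l'.filter fun x => decide (x ∈ hyp e)).length :=
        List.length_pos_of_mem he'f
      rw [List.length_cons] at h
      omega
    · exact ih (fun x hx => hself x (List.mem_cons_of_mem e hx))
        (fun x hx => le_trans (hmono (hyp x)) (hcount x (List.mem_cons_of_mem e hx)))

lemma crossings_le_one_geodesic (hconn : G.Connected) (hpc : IsParaclique G)
    {u v : V} (w : G.Walk u v)
    (h : ∀ H : Set (Sym2 V), IsHyperplane G H → crossings G H w ≤ 1) :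
    IsGeodesicWalk G w := by
  have : Nonempty V := ⟨u⟩
  classical
  set hyp : Sym2 V → Set (Sym2 V) :=
    fun e => if h : ∃ H, IsHyperplane G H ∧ e ∈ H then h.choose else ∅ with hhyp
  have hyp_spec : ∀ e ∈ G.edgeSet, IsHyperplane G (hyp e) ∧ e ∈ hyp e := by
    intro e he
    have hex := exists_hyperplane_of_edge he
    rw [hhyp]
    simp only [dif_pos hex]
    exact hex.choose_spec
  have hyp_unique : ∀ e ∈ G.edgeSet, ∀ H', IsHyperplane G H' → e ∈ H' → H' = hyp e := by
    intro e he H' hH' heH'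
    exact hyperplane_unique hconn hpc hH' (hyp_spec e he).1 heH' (hyp_spec e he).2
  obtain ⟨γ, hγ⟩ := hconn.exists_walk_length_eq_dist u v
  suffices hle : w.length ≤ γ.length by
    have h1 := SimpleGraph.dist_le w
    unfold IsGeodesicWalk
    omega
  have hnodup : (w.edges.map hyp).Nodup := by
    refine nodup_map_hyp hyp (fun e he => (hyp_spec e (w.edges_subset_edgeSet he)).2) ?_
    intro e he
    exact h (hyp e) (hyp_spec e (w.edges_subset_edgeSet he)).1
  have hsubset : (w.edges.map hyp) ⊆ (γ.edges.map hyp) := by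
    intro X hX
    obtain ⟨e, he, rfl⟩ := List.mem_map.1 hX
    have heE := w.edges_subset_edgeSet he
    have hHe := (hyp_spec e heE).1
    have hcross1 : crossings G (hyp e) w = 1 := by
      have := h (hyp e) hHe
      have h1 : 1 ≤ crossings G (hyp e) w :=
        (crossings_pos_iff w (hyp e)).2 ⟨e, he, (hyp_spec e heE).2⟩
      omega
    have hnss : ¬ SameSector G (hyp e) u v := cross_once_not_sameSector hconn hpc hHe hcross1
    have hγpos : 1 ≤ crossings G (hyp e) γ := by
      by_contra hc
      exact hnss (sameSector_of_no_crossings (w := γ) (by omega))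
    obtain ⟨e', he', he'H⟩ := (crossings_pos_iff γ (hyp e)).1 hγpos
    have : hyp e = hyp e' := hyp_unique e' (γ.edges_subset_edgeSet he') (hyp e) hHe he'H
    rw [this]
    exact List.mem_map_of_mem (f := hyp) he'
  calc w.length = (w.edges.map hyp).length := by
        rw [List.length_map, SimpleGraph.Walk.length_edges]
    _ ≤ (γ.edges.map hyp).length := (hnodup.subperm hsubset).length_le
    _ = γ.length := by rw [List.length_map, SimpleGraph.Walk.length_edges]

end helpers

/-- **Geodesics in paraclique graphs cross each hyperplane at most once**, and the
concatenation criterion: if every hyperplane crossed by a geodesic `p = [o,x]` is crossed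
by the geodesic `q = [o,y]` through the same ordered pair of sectors, then for any
geodesic `[x,y]` the concatenation `p · [x,y]` is a geodesic. -/
theorem paraclique_geodesic_crossings {V : Type*} (G : SimpleGraph V)
    (hconn : G.Connected) (hpc : IsParaclique G) :
    (∀ (u v : V) (w : G.Walk u v),
      IsGeodesicWalk G w ↔ ∀ H : Set (Sym2 V), IsHyperplane G H → crossings G H w ≤ 1) ∧
    (∀ (o x y : V) (p : G.Walk o x) (q : G.Walk o y),
      IsGeodesicWalk G p → IsGeodesicWalk G q →
      (∀ H : Set (Sym2 V), IsHyperplane G H → ∀ d ∈ p.darts, d.edge ∈ H →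
        ∃ d' ∈ q.darts, d'.edge ∈ H ∧ SameSector G H d.fst d'.fst ∧
          SameSector G H d.snd d'.snd) →
      ∀ r : G.Walk x y, IsGeodesicWalk G r → IsGeodesicWalk G (p.append r)) := by
  constructor
  · intro u v w
    exact ⟨fun hw H hH => geodesic_crossings_le_one hconn hpc w hw hH,
      fun h => crossings_le_one_geodesic hconn hpc w h⟩
  · intro o x y p q hp hq hcross r hr
    refine crossings_le_one_geodesic hconn hpc _ ?_
    intro H hH
    rw [crossings_append]
    have hp1 : crossings G H p ≤ 1 := geodesic_crossings_le_one hconn hpc p hp hH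
    have hr1 : crossings G H r ≤ 1 := geodesic_crossings_le_one hconn hpc r hr hH
    have hq1 : crossings G H q ≤ 1 := geodesic_crossings_le_one hconn hpc q hq hH
    by_contra hcon
    push_neg at hcon
    have hpe : crossings G H p = 1 := by omega
    have hre : crossings G H r = 1 := by omega
    obtain ⟨e, he, heH⟩ := (crossings_pos_iff p H).1 (by omega)
    obtain ⟨d, hd, rfl⟩ := List.mem_map.1 he
    obtain ⟨d', hd', hd'H, ss1, ss2⟩ := hcross H hH d hd heH
    have hqe : crossings G H q = 1 := by
      have : 1 ≤ crossings G H q :=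
        (crossings_pos_iff q H).2 ⟨d'.edge, List.mem_map_of_mem (f := SimpleGraph.Dart.edge) hd', hd'H⟩
      omega
    obtain ⟨-, hpx⟩ := cross_once_dart hpe hd heH
    obtain ⟨-, hqy⟩ := cross_once_dart hqe hd' hd'H
    have hxy : SameSector G H x y :=
      sameSector_trans (sameSector_symm hpx) (sameSector_trans ss2 hqy)
    exact cross_once_not_sameSector hconn hpc hH hre hxy
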